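/- arXiv:1804.05480 — 4 statements merged into one kernel-verified Lean document; each statement's English description precedes it below -/
import Mathlib

section
/- For every k ∈ {1,2,3}, the k-th column u(x) := Γ⁰(x)e_k of the Kelvin matrix satisfies the elastostatic Lamé equation μ Δu_j(x) + (λ+μ) ∂_j(∂_1 u_1 + ∂_2 u_2 + ∂_3 u_3)(x) = 0 for every x ∈ ℝ³ \ {0} and every j ∈ {1,2,3}; that is, L_{λ,μ} Γ⁰ = 0 away from the origin. -/
open Real MeasureTheory

noncomputable section

/-- Euclidean 3-space. -/
abbrev E3 := EuclideanSpace ℝ (Fin 3)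

/-- standard basis vectors -/
def eb (i : Fin 3) : E3 := EuclideanSpace.single i 1

/-- partial derivative in the i-th coordinate direction -/
def pd (i : Fin 3) (f : E3 → ℂ) (x : E3) : ℂ := fderiv ℝ f x (eb i)

/-- Hessian matrix of a scalar function -/
def hess (f : E3 → ℂ) (x : E3) : Matrix (Fin 3) (Fin 3) ℂ :=
  fun j k => pd j (fun y => pd k f y) x

def cT (mu : ℝ) : ℝ := Real.sqrt mu
def cL (lam mu : ℝ) : ℝ := Real.sqrt (lam + 2 * mu)

/-- the rank one matrix x xᵀ -/
def xxT (x : E3) : Matrix (Fin 3) (Fin 3) ℂ := fun j k => ((x j : ℂ) * (x k : ℂ))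

/-- The Kupradze fundamental matrix Γ^ω. -/
def kupradze (lam mu : ℝ) (ω : ℂ) (x : E3) : Matrix (Fin 3) (Fin 3) ℂ :=
  (-(Complex.exp (Complex.I * ω * (‖x‖ : ℂ) / (cT mu : ℂ)) / (4 * (π : ℂ) * (mu : ℂ) * (‖x‖ : ℂ)))) •
      (1 : Matrix (Fin 3) (Fin 3) ℂ)
    + (1 / (4 * (π : ℂ) * ω ^ 2)) •
      hess (fun y =>
        (Complex.exp (Complex.I * ω * (‖y‖ : ℂ) / (cT mu : ℂ))
          - Complex.exp (Complex.I * ω * (‖y‖ : ℂ) / (cL lam mu : ℂ))) / (‖y‖ : ℂ)) x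

def gamma1 (lam mu : ℝ) : ℝ := (1 / 2) * (1 / mu + 1 / (2 * mu + lam))
def gamma2 (lam mu : ℝ) : ℝ := (1 / 2) * (1 / mu - 1 / (2 * mu + lam))

/-- The Kelvin matrix Γ⁰. -/
def kelvin (lam mu : ℝ) (x : E3) : Matrix (Fin 3) (Fin 3) ℂ :=
  (-(((gamma1 lam mu) / (4 * π) : ℝ) : ℂ) * (1 / (‖x‖ : ℂ))) • (1 : Matrix (Fin 3) (Fin 3) ℂ)
    - ((((gamma2 lam mu) / (4 * π) : ℝ) : ℂ) / (‖x‖ : ℂ) ^ 3) • xxT x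

def gamma3 (lam mu : ℝ) : ℂ :=
  (-Complex.I / (12 * (π : ℂ))) * (2 / (cT mu : ℂ) ^ 3 + 1 / (cL lam mu : ℂ) ^ 3)

/-- The matrix Λ(x). -/
def lambdaMat (lam mu : ℝ) (x : E3) : Matrix (Fin 3) (Fin 3) ℂ :=
  (((1 / (32 * π)) * (3 / (cT mu) ^ 4 + 1 / (cL lam mu) ^ 4) * ‖x‖ : ℝ) : ℂ) •
      (1 : Matrix (Fin 3) (Fin 3) ℂ)
    - ((((1 / (32 * π)) * (1 / (cT mu) ^ 4 - 1 / (cL lam mu) ^ 4) / ‖x‖ : ℝ) : ℂ)) • xxT x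

/-- The Lamé operator L_{λ,μ} applied to a vector field. -/
def lame (lam mu : ℝ) (u : E3 → Fin 3 → ℂ) (x : E3) (j : Fin 3) : ℂ :=
  (mu : ℂ) * (∑ i : Fin 3, pd i (fun y => pd i (fun z => u z j) y) x)
    + ((lam : ℂ) + (mu : ℂ)) * pd j (fun y => ∑ i : Fin 3, pd i (fun z => u z i) y) x

/-- Conormal derivative ∂u/∂ν. -/
def conormal (lam mu : ℝ) (u : E3 → Fin 3 → ℂ) (ν : E3) (x : E3) (j : Fin 3) : ℂ :=
  (lam : ℂ) * (∑ i : Fin 3, pd i (fun z => u z i) x) * (ν j : ℂ)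
    + (mu : ℂ) * ∑ l : Fin 3,
        (pd l (fun z => u z j) x + pd j (fun z => u z l) x) * (ν l : ℂ)


namespace KelvinAux

def dl (p q : Fin 3) : ℝ := if p = q then 1 else 0
def sf (y : E3) : ℝ := ‖y‖⁻¹

def gf (a b : ℝ) (k j : Fin 3) (y : E3) : ℝ :=
  -(a * dl j k) * sf y - b * ((y j * y k) * sf y ^ 3)

def Gf (a b : ℝ) (k j p : Fin 3) (y : E3) : ℝ :=
  a * dl j k * (y p * sf y ^ 3)
    - b * ((dl j p * y k + dl k p * y j) * sf y ^ 3 - 3 * ((y j * y k * y p) * sf y ^ 5))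

def Hf (a b : ℝ) (k j p q : Fin 3) (y : E3) : ℝ :=
  a * dl j k * (dl p q * sf y ^ 3 - 3 * (y p * y q) * sf y ^ 5)
    - b * ((dl j p * dl k q + dl k p * dl j q) * sf y ^ 3
        - 3 * (dl j p * y k + dl k p * y j) * y q * sf y ^ 5
        - 3 * ((dl j q * (y k * y p) + dl k q * (y j * y p) + dl p q * (y j * y k)) * sf y ^ 5
            - 5 * (y j * y k * y p * y q) * sf y ^ 7))

@[simp] lemma innerSL_eb (x : E3) (i : Fin 3) : (innerSL ℝ x : E3 →L[ℝ] ℝ) (eb i) = x i := by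
  simp [eb, EuclideanSpace.inner_single_right]

@[simp] lemma proj_eb (c i : Fin 3) :
    (EuclideanSpace.proj c : E3 →L[ℝ] ℝ) (eb i) = dl c i := by
  simp [eb, dl, EuclideanSpace.single_apply]

lemma hasFDerivAt_coord (c : Fin 3) (x : E3) :
    HasFDerivAt (fun y : E3 => y c) (EuclideanSpace.proj c : E3 →L[ℝ] ℝ) x := by
  have h := (EuclideanSpace.proj c : E3 →L[ℝ] ℝ).hasFDerivAt (x := x)
  exact h.congr_of_eventuallyEq (Filter.Eventually.of_forall fun y => rfl)

lemma hasFDerivAt_sf {x : E3} (hx : x ≠ 0) :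
    HasFDerivAt sf ((-(sf x ^ 3)) • (innerSL ℝ x : E3 →L[ℝ] ℝ)) x := by
  have hr : (0:ℝ) < ‖x‖ := norm_pos_iff.mpr hx
  have hpow : HasDerivAt (fun t : ℝ => t ^ (-(1/2) : ℝ))
      ((-(1/2)) * (‖x‖ ^ 2) ^ ((-(1/2) : ℝ) - 1)) (‖x‖ ^ 2) :=
    Real.hasDerivAt_rpow_const (Or.inl (by positivity))
  have hcomp := hpow.comp_hasFDerivAt x ((hasStrictFDerivAt_norm_sq x).hasFDerivAt)
  have hfun : ((fun t : ℝ => t ^ (-(1/2) : ℝ)) ∘ fun y : E3 => ‖y‖ ^ 2) = sf := by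
    funext y
    simp only [Function.comp_apply, sf]
    rw [← Real.rpow_natCast ‖y‖ 2, ← Real.rpow_mul (norm_nonneg y)]
    norm_num
    rw [Real.rpow_neg (norm_nonneg y), Real.rpow_one]
  rw [hfun] at hcomp
  have key : ((‖x‖ : ℝ) ^ 2) ^ ((-(1/2) : ℝ) - 1) = sf x ^ 3 := by
    rw [← Real.rpow_natCast ‖x‖ 2, ← Real.rpow_mul (norm_nonneg x)]
    have : ((2:ℕ) : ℝ) * ((-(1/2) : ℝ) - 1) = -3 := by norm_num
    rw [this, show ((-3 : ℝ)) = -((3:ℕ):ℝ) by norm_num, Real.rpow_neg (norm_nonneg x),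
      Real.rpow_natCast, sf, inv_pow]
  refine hcomp.congr_fderiv ?_
  refine ContinuousLinearMap.ext fun v => ?_
  simp only [ContinuousLinearMap.smul_apply, smul_eq_mul, key, two_smul,
    ContinuousLinearMap.add_apply]
  ring

lemma pd_ofReal {f : E3 → ℝ} {L : E3 →L[ℝ] ℝ} {x : E3} (h : HasFDerivAt f L x) (i : Fin 3) :
    pd i (fun y => ((f y : ℝ) : ℂ)) x = ((L (eb i) : ℝ) : ℂ) := by
  have h2 : HasFDerivAt (fun y => ((f y : ℝ) : ℂ)) (Complex.ofRealCLM.comp L) x :=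
    Complex.ofRealCLM.hasFDerivAt.comp x h
  rw [pd, h2.fderiv]
  rfl

lemma pd_congr {f g : E3 → ℂ} {x : E3} (h : f =ᶠ[nhds x] g) (i : Fin 3) :
    pd i f x = pd i g x := by
  unfold pd
  rw [h.fderiv_eq]

lemma pd_gf (a b : ℝ) (k j p : Fin 3) {x : E3} (hx : x ≠ 0) :
    pd p (fun y => ((gf a b k j y : ℝ) : ℂ)) x = ((Gf a b k j p x : ℝ) : ℂ) := by
  have hs := hasFDerivAt_sf hx
  have hD : HasFDerivAt (gf a b k j) _ x :=
    (hs.const_mul (-(a * dl j k))).sub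
      ((((hasFDerivAt_coord j x).mul (hasFDerivAt_coord k x)).mul
        ((hasDerivAt_pow 3 (sf x)).comp_hasFDerivAt x hs)).const_mul b)
  rw [pd_ofReal hD p]
  norm_cast
  simp only [ContinuousLinearMap.sub_apply, ContinuousLinearMap.add_apply,
    ContinuousLinearMap.smul_apply, smul_eq_mul, innerSL_eb, proj_eb, Gf]
  norm_num
  ring

lemma exGf (a b : ℝ) (k j p : Fin 3) {x : E3} (hx : x ≠ 0) :
    ∃ L : E3 →L[ℝ] ℝ, HasFDerivAt (Gf a b k j p) L x ∧
      ∀ q, L (eb q) = Hf a b k j p q x := by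
  have hs := hasFDerivAt_sf hx
  have hD : HasFDerivAt (Gf a b k j p) _ x :=
    (((hasFDerivAt_coord p x).mul
        ((hasDerivAt_pow 3 (sf x)).comp_hasFDerivAt x hs)).const_mul (a * dl j k)).sub
      ((((((hasFDerivAt_coord k x).const_mul (dl j p)).add
          ((hasFDerivAt_coord j x).const_mul (dl k p))).mul
            ((hasDerivAt_pow 3 (sf x)).comp_hasFDerivAt x hs)).sub
        (((((hasFDerivAt_coord j x).mul (hasFDerivAt_coord k x)).mul
          (hasFDerivAt_coord p x)).mul
            ((hasDerivAt_pow 5 (sf x)).comp_hasFDerivAt x hs)).const_mul 3)).const_mul b)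
  refine ⟨_, hD, fun q => ?_⟩
  simp only [ContinuousLinearMap.sub_apply, ContinuousLinearMap.add_apply,
    ContinuousLinearMap.smul_apply, smul_eq_mul, innerSL_eb, proj_eb, Hf]
  norm_num
  ring

lemma fm0 (h : 0 < 3) : (⟨0, h⟩ : Fin 3) = 0 := rfl
lemma fm1 (h : 1 < 3) : (⟨1, h⟩ : Fin 3) = 1 := rfl
lemma fm2 (h : 2 < 3) : (⟨2, h⟩ : Fin 3) = 2 := rfl

lemma final_algebra (a b lam mu : ℝ) {x : E3} (hx : x ≠ 0)
    (hab : (lam + mu) * (a - b) = 2 * mu * b) (j k : Fin 3) :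
    mu * (Hf a b k j 0 0 x + Hf a b k j 1 1 x + Hf a b k j 2 2 x)
      + (lam + mu) * (Hf a b k 0 0 j x + Hf a b k 1 1 j x + Hf a b k 2 2 j x) = 0 := by
  have hn : ‖x‖ ≠ 0 := norm_ne_zero_iff.mpr hx
  have h2 : x 0 ^ 2 + x 1 ^ 2 + x 2 ^ 2 = ‖x‖ ^ 2 := by
    rw [EuclideanSpace.norm_eq, Real.sq_sqrt (by positivity)]
    simp [Fin.sum_univ_three, sq_abs]
  have hS : (x 0 ^ 2 + x 1 ^ 2 + x 2 ^ 2) * sf x ^ 2 = 1 := by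
    rw [h2, sf]; field_simp
  fin_cases j <;> fin_cases k <;> simp only [Hf, dl, Fin.isValue, fm0, fm1, fm2] <;> norm_num [Fin.ext_iff]
  · linear_combination (mu * (-3*a*sf x^3 - 15*b*(x 0 * x 0)*sf x^5) + (lam+mu) * (3*b*sf x^3 - 15*b*(x 0 * x 0)*sf x^5)) * hS + (sf x^3 - 3*(x 0 * x 0)*sf x^5) * hab
  · linear_combination (mu * (-15*b*(x 0 * x 1)*sf x^5) + (lam+mu) * (-15*b*(x 0 * x 1)*sf x^5)) * hS + (-3*(x 0 * x 1)*sf x^5) * hab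
  · linear_combination (mu * (-15*b*(x 0 * x 2)*sf x^5) + (lam+mu) * (-15*b*(x 0 * x 2)*sf x^5)) * hS + (-3*(x 0 * x 2)*sf x^5) * hab
  · linear_combination (mu * (-15*b*(x 1 * x 0)*sf x^5) + (lam+mu) * (-15*b*(x 1 * x 0)*sf x^5)) * hS + (-3*(x 1 * x 0)*sf x^5) * hab
  · linear_combination (mu * (-3*a*sf x^3 - 15*b*(x 1 * x 1)*sf x^5) + (lam+mu) * (3*b*sf x^3 - 15*b*(x 1 * x 1)*sf x^5)) * hS + (sf x^3 - 3*(x 1 * x 1)*sf x^5) * hab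
  · linear_combination (mu * (-15*b*(x 1 * x 2)*sf x^5) + (lam+mu) * (-15*b*(x 1 * x 2)*sf x^5)) * hS + (-3*(x 1 * x 2)*sf x^5) * hab
  · linear_combination (mu * (-15*b*(x 2 * x 0)*sf x^5) + (lam+mu) * (-15*b*(x 2 * x 0)*sf x^5)) * hS + (-3*(x 2 * x 0)*sf x^5) * hab
  · linear_combination (mu * (-15*b*(x 2 * x 1)*sf x^5) + (lam+mu) * (-15*b*(x 2 * x 1)*sf x^5)) * hS + (-3*(x 2 * x 1)*sf x^5) * hab
  · linear_combination (mu * (-3*a*sf x^3 - 15*b*(x 2 * x 2)*sf x^5) + (lam+mu) * (3*b*sf x^3 - 15*b*(x 2 * x 2)*sf x^5)) * hS + (sf x^3 - 3*(x 2 * x 2)*sf x^5) * hab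

end KelvinAux



/-- each column of the Kelvin matrix solves the elastostatic
Lamé equation `L_{λ,μ} Γ⁰ = 0` away from the origin. -/
theorem kelvin_column_solves_lame (lam mu : ℝ) (hmu : 0 < mu) (hconv : 0 < 3 * lam + 2 * mu)
    (k : Fin 3) (x : E3) (hx : x ≠ 0) (j : Fin 3) :
    lame lam mu (fun y i => kelvin lam mu y i k) x j = 0 := by
  have hπ : (π : ℝ) ≠ 0 := Real.pi_ne_zero
  have hmu' : mu ≠ 0 := ne_of_gt hmu
  have h2l : (2 * mu + lam) ≠ 0 := by nlinarith
  have hab : (lam + mu) * ((gamma1 lam mu / (4 * π)) - (gamma2 lam mu / (4 * π))) = 2 * mu * (gamma2 lam mu / (4 * π)) := by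
    simp only [gamma1, gamma2]
    field_simp [show mu * 2 + lam ≠ 0 by rwa [mul_comm]]
    ring
  have hu : ∀ i : Fin 3, (fun z => kelvin lam mu z i k)
      = fun z => ((KelvinAux.gf (gamma1 lam mu / (4 * π)) (gamma2 lam mu / (4 * π)) k i z : ℝ) : ℂ) := by
    intro i; funext z
    by_cases h : i = k
    · simp only [kelvin, KelvinAux.gf, KelvinAux.dl, KelvinAux.sf, xxT, Matrix.sub_apply,
        Matrix.smul_apply, Matrix.one_apply, smul_eq_mul, if_pos h]
      push_cast
      ring
    · simp only [kelvin, KelvinAux.gf, KelvinAux.dl, KelvinAux.sf, xxT, Matrix.sub_apply,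
        Matrix.smul_apply, Matrix.one_apply, smul_eq_mul, if_neg h]
      push_cast
      ring
  have hev : ∀ᶠ y in nhds x, y ≠ (0:E3) := eventually_ne_nhds hx
  have hpd1 : ∀ jj i : Fin 3, (fun y => pd i (fun z => kelvin lam mu z jj k) y)
      =ᶠ[nhds x] fun y => ((KelvinAux.Gf (gamma1 lam mu / (4 * π)) (gamma2 lam mu / (4 * π)) k jj i y : ℝ) : ℂ) := by
    intro jj i
    filter_upwards [hev] with y hy
    rw [hu jj]
    exact KelvinAux.pd_gf (gamma1 lam mu / (4 * π)) (gamma2 lam mu / (4 * π)) k jj i hy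
  have hlap : ∀ i : Fin 3, pd i (fun y => pd i (fun z => kelvin lam mu z j k) y) x
      = ((KelvinAux.Hf (gamma1 lam mu / (4 * π)) (gamma2 lam mu / (4 * π)) k j i i x : ℝ) : ℂ) := by
    intro i
    rw [KelvinAux.pd_congr (hpd1 j i) i]
    obtain ⟨L, hL, hLe⟩ := KelvinAux.exGf (gamma1 lam mu / (4 * π)) (gamma2 lam mu / (4 * π)) k j i hx
    rw [KelvinAux.pd_ofReal hL i, hLe i]
  have hdiv : pd j (fun y => ∑ i : Fin 3, pd i (fun z => kelvin lam mu z i k) y) x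
      = ((KelvinAux.Hf (gamma1 lam mu / (4 * π)) (gamma2 lam mu / (4 * π)) k 0 0 j x + KelvinAux.Hf (gamma1 lam mu / (4 * π)) (gamma2 lam mu / (4 * π)) k 1 1 j x
          + KelvinAux.Hf (gamma1 lam mu / (4 * π)) (gamma2 lam mu / (4 * π)) k 2 2 j x : ℝ) : ℂ) := by
    obtain ⟨L0, hL0, he0⟩ := KelvinAux.exGf (gamma1 lam mu / (4 * π)) (gamma2 lam mu / (4 * π)) k 0 0 hx
    obtain ⟨L1, hL1, he1⟩ := KelvinAux.exGf (gamma1 lam mu / (4 * π)) (gamma2 lam mu / (4 * π)) k 1 1 hx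
    obtain ⟨L2, hL2, he2⟩ := KelvinAux.exGf (gamma1 lam mu / (4 * π)) (gamma2 lam mu / (4 * π)) k 2 2 hx
    have hsum : HasFDerivAt (fun y => KelvinAux.Gf (gamma1 lam mu / (4 * π)) (gamma2 lam mu / (4 * π)) k 0 0 y
        + KelvinAux.Gf (gamma1 lam mu / (4 * π)) (gamma2 lam mu / (4 * π)) k 1 1 y + KelvinAux.Gf (gamma1 lam mu / (4 * π)) (gamma2 lam mu / (4 * π)) k 2 2 y) (L0 + L1 + L2) x :=
      (hL0.add hL1).add hL2
    have hev2 : (fun y => ∑ i : Fin 3, pd i (fun z => kelvin lam mu z i k) y)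
        =ᶠ[nhds x] fun y => (((KelvinAux.Gf (gamma1 lam mu / (4 * π)) (gamma2 lam mu / (4 * π)) k 0 0 y + KelvinAux.Gf (gamma1 lam mu / (4 * π)) (gamma2 lam mu / (4 * π)) k 1 1 y
            + KelvinAux.Gf (gamma1 lam mu / (4 * π)) (gamma2 lam mu / (4 * π)) k 2 2 y : ℝ)) : ℂ) := by
      filter_upwards [hev] with y hy
      rw [Fin.sum_univ_three, hu 0, hu 1, hu 2,
        KelvinAux.pd_gf (gamma1 lam mu / (4 * π)) (gamma2 lam mu / (4 * π)) k 0 0 hy, KelvinAux.pd_gf (gamma1 lam mu / (4 * π)) (gamma2 lam mu / (4 * π)) k 1 1 hy,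
        KelvinAux.pd_gf (gamma1 lam mu / (4 * π)) (gamma2 lam mu / (4 * π)) k 2 2 hy]
      push_cast
      ring
    rw [KelvinAux.pd_congr hev2 j, KelvinAux.pd_ofReal hsum j]
    push_cast
    simp [ContinuousLinearMap.add_apply, he0 j, he1 j, he2 j]
  have hfin := KelvinAux.final_algebra (gamma1 lam mu / (4 * π)) (gamma2 lam mu / (4 * π)) lam mu hx hab j k
  simp only [lame]
  rw [Fin.sum_univ_three, hlap 0, hlap 1, hlap 2, hdiv]
  push_cast
  exact_mod_cast hfin

end
end

section
/- (Key identity in the proof of Lemma 2.2, eq. (2.31)) For every k ∈ {1,2,3}, the k-th column v(x) := Λ(x)e_k of the matrix Λ satisfies μ Δv_j(x) + (λ+μ) ∂_j(∂_1 v_1 + ∂_2 v_2 + ∂_3 v_3)(x) = −(Γ⁰(x))_{jk} for every x ∈ ℝ³ \ {0} and every j ∈ {1,2,3}; that is, L_{λ,μ} Λ = −Γ⁰ away from the origin. -/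
open Real MeasureTheory

noncomputable section

namespace LK

set_option maxHeartbeats 1000000

lemma hasFDerivAt_norm' {x : E3} (hx : x ≠ 0) :
    HasFDerivAt (fun y : E3 => ‖y‖) ((‖x‖⁻¹) • innerSL ℝ x) x := by
  have h0 : (0:ℝ) < ‖x‖ := norm_pos_iff.mpr hx
  have hsq : HasFDerivAt (fun y : E3 => ‖y‖^2) (2 • (innerSL ℝ x)) x :=
    (hasStrictFDerivAt_norm_sq x).hasFDerivAt
  have hsqrt : HasDerivAt Real.sqrt (1 / (2 * Real.sqrt (‖x‖^2))) (‖x‖^2) := by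
    apply Real.hasDerivAt_sqrt; positivity
  have h2 := hsqrt.comp_hasFDerivAt x hsq
  have heq : Real.sqrt ∘ (fun y : E3 => ‖y‖^2) = fun y : E3 => ‖y‖ := by
    funext y; simp [Function.comp, Real.sqrt_sq (norm_nonneg y)]
  rw [heq] at h2
  refine h2.congr_fderiv ?_
  rw [Real.sqrt_sq (norm_nonneg x)]
  ext y; simp; field_simp

lemma hasFDerivAt_winv {x : E3} (hx : x ≠ 0) :
    HasFDerivAt (fun y : E3 => ‖y‖⁻¹) ((-(‖x‖^2)⁻¹) • ((‖x‖⁻¹) • innerSL ℝ x)) x := by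
  have h0 : ‖x‖ ≠ 0 := norm_ne_zero_iff.mpr hx
  exact (hasDerivAt_inv h0).comp_hasFDerivAt x (hasFDerivAt_norm' hx)

lemma hasFDerivAt_coord (p : Fin 3) (x : E3) :
    HasFDerivAt (fun y : E3 => y p) (EuclideanSpace.proj p (𝕜 := ℝ)) x :=
  (EuclideanSpace.proj p (𝕜 := ℝ) (ι := Fin 3)).hasFDerivAt (x := x)

lemma pd_ofReal {g : E3 → ℝ} {D : E3 →L[ℝ] ℝ} {x : E3} (h : HasFDerivAt g D x) (i : Fin 3) :
    pd i (fun y => ((g y : ℝ) : ℂ)) x = ((D (eb i) : ℝ) : ℂ) := by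
  have h2 : HasFDerivAt (fun y => ((g y : ℝ) : ℂ)) (Complex.ofRealCLM.comp D) x :=
    Complex.ofRealCLM.hasFDerivAt.comp x h
  rw [pd, h2.fderiv]; simp

lemma innerSL_eb (x : E3) (i : Fin 3) : (innerSL ℝ x) (eb i) = x i := by
  simp [eb, EuclideanSpace.inner_single_right]

lemma proj_eb (i p : Fin 3) : (EuclideanSpace.proj p (𝕜 := ℝ)) (eb i) = if i = p then 1 else 0 := by
  simp [eb, EuclideanSpace.single_apply, eq_comm]

def dl (i j : Fin 3) : ℝ := if i = j then 1 else 0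

/-- the scalar entry of Λ -/
def fr (a b : ℝ) (k i : Fin 3) (y : E3) : ℝ :=
  a * ‖y‖ * dl i k - b * (y i * y k * ‖y‖⁻¹)

/-- first derivatives -/
def phi (a b : ℝ) (k i i' : Fin 3) (y : E3) : ℝ :=
  a * dl i' k * (y i * ‖y‖⁻¹)
    - b * (dl i i' * (y k * ‖y‖⁻¹) + dl i k * (y i' * ‖y‖⁻¹)
        - y i * y i' * y k * (‖y‖⁻¹ * ‖y‖⁻¹ * ‖y‖⁻¹))

/-- second derivatives -/
def Phi (a b : ℝ) (k l i i' : Fin 3) (x : E3) : ℝ :=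
  a * dl i' k * (dl l i * ‖x‖⁻¹ - x l * x i * (‖x‖⁻¹ * ‖x‖⁻¹ * ‖x‖⁻¹))
    - b * (dl i i' * (dl l k * ‖x‖⁻¹ - x l * x k * (‖x‖⁻¹ * ‖x‖⁻¹ * ‖x‖⁻¹))
        + dl i k * (dl l i' * ‖x‖⁻¹ - x l * x i' * (‖x‖⁻¹ * ‖x‖⁻¹ * ‖x‖⁻¹))
        - ((dl l i * x i' * x k + dl l i' * x i * x k + dl l k * x i * x i')
              * (‖x‖⁻¹ * ‖x‖⁻¹ * ‖x‖⁻¹)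
            - 3 * x l * x i * x i' * x k
              * (‖x‖⁻¹ * ‖x‖⁻¹ * ‖x‖⁻¹ * ‖x‖⁻¹ * ‖x‖⁻¹)))

lemma pd_fr (a b : ℝ) (k i i' : Fin 3) {y : E3} (hy : y ≠ 0) :
    pd i (fun z => ((fr a b k i' z : ℝ) : ℂ)) y = ((phi a b k i i' y : ℝ) : ℂ) := by
  have h0 : ‖y‖ ≠ 0 := norm_ne_zero_iff.mpr hy
  have h : HasFDerivAt (fr a b k i') _ y :=
    (((hasFDerivAt_norm' hy).const_mul a).mul_const (dl i' k)).sub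
      ((((hasFDerivAt_coord i' y).mul (hasFDerivAt_coord k y)).mul
        (hasFDerivAt_winv hy)).const_mul b)
  rw [pd_ofReal h i]
  norm_cast
  simp only [ContinuousLinearMap.coe_sub', ContinuousLinearMap.coe_smul',
    ContinuousLinearMap.add_apply, ContinuousLinearMap.smul_apply, Pi.sub_apply, Pi.smul_apply,
    ContinuousLinearMap.coe_add', Pi.add_apply, Pi.neg_apply, ContinuousLinearMap.neg_apply,
    ContinuousLinearMap.coe_neg', innerSL_eb, proj_eb, smul_eq_mul, phi, dl, Pi.mul_apply]
  ring

lemma exists_hasFDerivAt_phi (a b : ℝ) (k i i' : Fin 3) {y : E3} (hy : y ≠ 0) :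
    ∃ D : E3 →L[ℝ] ℝ, HasFDerivAt (phi a b k i i') D y ∧
      ∀ l, D (eb l) = Phi a b k l i i' y := by
  have h0 : ‖y‖ ≠ 0 := norm_ne_zero_iff.mpr hy
  have hw := hasFDerivAt_winv hy
  have h1 := ((hasFDerivAt_coord i y).mul hw).const_mul (a * dl i' k)
  have h2 := ((hasFDerivAt_coord k y).mul hw).const_mul (dl i i')
  have h3 := ((hasFDerivAt_coord i' y).mul hw).const_mul (dl i k)
  have h4 := (((hasFDerivAt_coord i y).mul (hasFDerivAt_coord i' y)).mul
      (hasFDerivAt_coord k y)).mul ((hw.mul hw).mul hw)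
  have h := h1.sub (((h2.add h3).sub h4).const_mul b)
  refine ⟨_, h, fun l => ?_⟩
  simp only [ContinuousLinearMap.coe_sub', ContinuousLinearMap.coe_smul',
    ContinuousLinearMap.add_apply, ContinuousLinearMap.smul_apply, Pi.sub_apply, Pi.smul_apply,
    ContinuousLinearMap.coe_add', Pi.add_apply, Pi.neg_apply, ContinuousLinearMap.neg_apply,
    ContinuousLinearMap.coe_neg', innerSL_eb, proj_eb, smul_eq_mul, Phi, dl, Pi.mul_apply]
  ring

lemma pd_phi (a b : ℝ) (k i i' l : Fin 3) {y : E3} (hy : y ≠ 0) :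
    pd l (fun z => ((phi a b k i i' z : ℝ) : ℂ)) y = ((Phi a b k l i i' y : ℝ) : ℂ) := by
  obtain ⟨D, hD, hval⟩ := exists_hasFDerivAt_phi a b k i i' hy
  rw [pd_ofReal hD l, hval l]

lemma pd_congr {f g : E3 → ℂ} {x : E3} (h : f =ᶠ[nhds x] g) (l : Fin 3) :
    pd l f x = pd l g x := by
  unfold pd; rw [h.fderiv_eq]

lemma pd_pd_fr (a b : ℝ) (k i i' l : Fin 3) {x : E3} (hx : x ≠ 0) :
    pd l (fun y => pd i (fun z => ((fr a b k i' z : ℝ) : ℂ)) y) x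
      = ((Phi a b k l i i' x : ℝ) : ℂ) := by
  have hev : (fun y => pd i (fun z => ((fr a b k i' z : ℝ) : ℂ)) y) =ᶠ[nhds x]
      (fun y => ((phi a b k i i' y : ℝ) : ℂ)) := by
    filter_upwards [isOpen_ne.mem_nhds hx] with y hy
    exact pd_fr a b k i i' hy
  rw [pd_congr hev l]
  exact pd_phi a b k i i' l hx

lemma pd_div (a b : ℝ) (k j : Fin 3) {x : E3} (hx : x ≠ 0) :
    pd j (fun y => ∑ i : Fin 3, pd i (fun z => ((fr a b k i z : ℝ) : ℂ)) y) x
      = ((Phi a b k j 0 0 x + Phi a b k j 1 1 x + Phi a b k j 2 2 x : ℝ) : ℂ) := by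
  have hev : (fun y => ∑ i : Fin 3, pd i (fun z => ((fr a b k i z : ℝ) : ℂ)) y) =ᶠ[nhds x]
      (fun y => ((phi a b k 0 0 y + phi a b k 1 1 y + phi a b k 2 2 y : ℝ) : ℂ)) := by
    filter_upwards [isOpen_ne.mem_nhds hx] with y hy
    rw [Fin.sum_univ_three, pd_fr a b k 0 0 hy, pd_fr a b k 1 1 hy, pd_fr a b k 2 2 hy]
    push_cast
    ring
  rw [pd_congr hev j]
  obtain ⟨D0, h0, v0⟩ := exists_hasFDerivAt_phi a b k 0 0 hx
  obtain ⟨D1, h1, v1⟩ := exists_hasFDerivAt_phi a b k 1 1 hx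
  obtain ⟨D2, h2, v2⟩ := exists_hasFDerivAt_phi a b k 2 2 hx
  have hsum := (h0.add h1).add h2
  rw [pd_ofReal (g := fun y => phi a b k 0 0 y + phi a b k 1 1 y + phi a b k 2 2 y) hsum j]
  simp only [ContinuousLinearMap.add_apply, v0, v1, v2]

lemma main_real (lam mu : ℝ) (hmu : 0 < mu) (hml : 0 < lam + 2 * mu) (k j : Fin 3)
    (x : E3) (hx : x ≠ 0) :
    mu * (Phi (1/(32*π) * (3/(cT mu)^4 + 1/(cL lam mu)^4))
              (1/(32*π) * (1/(cT mu)^4 - 1/(cL lam mu)^4)) k 0 0 j x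
        + Phi (1/(32*π) * (3/(cT mu)^4 + 1/(cL lam mu)^4))
              (1/(32*π) * (1/(cT mu)^4 - 1/(cL lam mu)^4)) k 1 1 j x
        + Phi (1/(32*π) * (3/(cT mu)^4 + 1/(cL lam mu)^4))
              (1/(32*π) * (1/(cT mu)^4 - 1/(cL lam mu)^4)) k 2 2 j x)
      + (lam + mu) * (Phi (1/(32*π) * (3/(cT mu)^4 + 1/(cL lam mu)^4))
              (1/(32*π) * (1/(cT mu)^4 - 1/(cL lam mu)^4)) k j 0 0 x
        + Phi (1/(32*π) * (3/(cT mu)^4 + 1/(cL lam mu)^4))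
              (1/(32*π) * (1/(cT mu)^4 - 1/(cL lam mu)^4)) k j 1 1 x
        + Phi (1/(32*π) * (3/(cT mu)^4 + 1/(cL lam mu)^4))
              (1/(32*π) * (1/(cT mu)^4 - 1/(cL lam mu)^4)) k j 2 2 x)
    = gamma1 lam mu / (4*π) * ‖x‖⁻¹ * dl j k
      + gamma2 lam mu / (4*π) * (‖x‖⁻¹ * ‖x‖⁻¹ * ‖x‖⁻¹) * (x j * x k) := by
  have hr : ‖x‖ ≠ 0 := norm_ne_zero_iff.mpr hx
  have hs : x 0 ^ 2 + x 1 ^ 2 + x 2 ^ 2 = ‖x‖ ^ 2 := by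
    have h := EuclideanSpace.norm_eq x
    rw [h, Real.sq_sqrt (by positivity)]
    simp [Fin.sum_univ_three, sq_abs]
  have hcT : (cT mu)^4 = mu^2 := by
    rw [cT, show (4:ℕ) = 2*2 from rfl, pow_mul, Real.sq_sqrt hmu.le]
  have hcL : (cL lam mu)^4 = (lam + 2*mu)^2 := by
    rw [cL, show (4:ℕ) = 2*2 from rfl, pow_mul, Real.sq_sqrt hml.le]
  have hmu' : mu ≠ 0 := hmu.ne'
  have hml' : lam + 2*mu ≠ 0 := hml.ne'
  have hml2 : 2*mu + lam ≠ 0 := by intro h; apply hml'; linarith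
  have hpi : (π:ℝ) ≠ 0 := Real.pi_ne_zero
  rw [hcT, hcL]
  set a := 1/(32*π) * (3/mu^2 + 1/(lam+2*mu)^2) with ha
  set b := 1/(32*π) * (1/mu^2 - 1/(lam+2*mu)^2) with hb
  set G1 := gamma1 lam mu / (4*π) with hG1
  set G2 := gamma2 lam mu / (4*π) with hG2
  have hab1 : 2*mu*(a-b) + (lam+mu)*(a-3*b) = G1 := by
    rw [ha, hb, hG1, gamma1]; field_simp; ring
  have hab2 : 4*mu*b - (lam+mu)*(a-3*b) = G2 := by
    rw [ha, hb, hG2, gamma2, show 2*mu+lam = lam+2*mu by ring, show lam + mu = (lam+2*mu) - mu by ring]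
    generalize lam + 2*mu = L at hml' ⊢
    field_simp; ring
  clear_value a b G1 G2
  simp only [Phi, dl]
  set t := ‖x‖⁻¹ with htdef
  have hst : (x 0^2 + x 1^2 + x 2^2) * (t*t) = 1 := by
    rw [htdef, hs, ← mul_inv, pow_two]
    exact mul_inv_cancel₀ (mul_ne_zero hr hr)
  clear_value t
  have e00 : ((0:Fin 3) = 0) = True := by simp
  have e11 : ((1:Fin 3) = 1) = True := by simp
  have e22 : ((2:Fin 3) = 2) = True := by simp
  have e01 : ((0:Fin 3) = 1) = False := by simp [Fin.ext_iff]
  have e02 : ((0:Fin 3) = 2) = False := by simp [Fin.ext_iff]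
  have e10 : ((1:Fin 3) = 0) = False := by simp [Fin.ext_iff]
  have e12 : ((1:Fin 3) = 2) = False := by simp [Fin.ext_iff]
  have e20 : ((2:Fin 3) = 0) = False := by simp [Fin.ext_iff]
  have e21 : ((2:Fin 3) = 1) = False := by simp [Fin.ext_iff]
  have hj : j = 0 ∨ j = 1 ∨ j = 2 := by fin_cases j <;> simp
  have hk : k = 0 ∨ k = 1 ∨ k = 2 := by fin_cases k <;> simp
  rcases hj with rfl | rfl | rfl <;> rcases hk with rfl | rfl | rfl <;>
    simp only [e00, e11, e22, e01, e02, e10, e12, e20, e21, if_true, if_false,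
      mul_zero, zero_mul, mul_one, one_mul, sub_zero, zero_sub, add_zero, zero_add]
  · linear_combination (mu*(-a*t - 3*b*(x 0)^2*(t*t*t)) + (lam+mu)*(b*t - 3*b*(x 0)^2*(t*t*t))) * hst
      + t * hab1 + ((x 0)^2*(t*t*t)) * hab2
  · linear_combination (mu*(-3*b*(x 0)*(x 1)*(t*t*t)) + (lam+mu)*(-3*b*(x 0)*(x 1)*(t*t*t))) * hst
      + ((x 0)*(x 1)*(t*t*t)) * hab2
  · linear_combination (mu*(-3*b*(x 0)*(x 2)*(t*t*t)) + (lam+mu)*(-3*b*(x 0)*(x 2)*(t*t*t))) * hst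
      + ((x 0)*(x 2)*(t*t*t)) * hab2
  · linear_combination (mu*(-3*b*(x 1)*(x 0)*(t*t*t)) + (lam+mu)*(-3*b*(x 1)*(x 0)*(t*t*t))) * hst
      + ((x 1)*(x 0)*(t*t*t)) * hab2
  · linear_combination (mu*(-a*t - 3*b*(x 1)^2*(t*t*t)) + (lam+mu)*(b*t - 3*b*(x 1)^2*(t*t*t))) * hst
      + t * hab1 + ((x 1)^2*(t*t*t)) * hab2
  · linear_combination (mu*(-3*b*(x 1)*(x 2)*(t*t*t)) + (lam+mu)*(-3*b*(x 1)*(x 2)*(t*t*t))) * hst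
      + ((x 1)*(x 2)*(t*t*t)) * hab2
  · linear_combination (mu*(-3*b*(x 2)*(x 0)*(t*t*t)) + (lam+mu)*(-3*b*(x 2)*(x 0)*(t*t*t))) * hst
      + ((x 2)*(x 0)*(t*t*t)) * hab2
  · linear_combination (mu*(-3*b*(x 2)*(x 1)*(t*t*t)) + (lam+mu)*(-3*b*(x 2)*(x 1)*(t*t*t))) * hst
      + ((x 2)*(x 1)*(t*t*t)) * hab2
  · linear_combination (mu*(-a*t - 3*b*(x 2)^2*(t*t*t)) + (lam+mu)*(b*t - 3*b*(x 2)^2*(t*t*t))) * hst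
      + t * hab1 + ((x 2)^2*(t*t*t)) * hab2

end LK

/-- eq. (2.31): `L_{λ,μ} Λ = −Γ⁰` away from the origin. -/
theorem lame_lambdaMat_eq_neg_kelvin (lam mu : ℝ) (hmu : 0 < mu)
    (hconv : 0 < 3 * lam + 2 * mu) (k : Fin 3) (x : E3) (hx : x ≠ 0) (j : Fin 3) :
    lame lam mu (fun y i => lambdaMat lam mu y i k) x j = - kelvin lam mu x j k := by
  have hml : 0 < lam + 2 * mu := by linarith
  have hu : (fun y i => lambdaMat lam mu y i k)
      = (fun y i => ((LK.fr (1/(32*π) * (3/(cT mu)^4 + 1/(cL lam mu)^4))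
          (1/(32*π) * (1/(cT mu)^4 - 1/(cL lam mu)^4)) k i y : ℝ) : ℂ)) := by
    funext y i
    simp only [lambdaMat, LK.fr, LK.dl, xxT, Matrix.sub_apply, Matrix.smul_apply,
      Matrix.one_apply, smul_eq_mul]
    push_cast [apply_ite Complex.ofReal]
    ring
  rw [hu]
  simp only [lame]
  rw [Fin.sum_univ_three]
  rw [LK.pd_pd_fr _ _ k 0 j 0 hx, LK.pd_pd_fr _ _ k 1 j 1 hx, LK.pd_pd_fr _ _ k 2 j 2 hx,
    LK.pd_div _ _ k j hx]
  have hkel : - kelvin lam mu x j k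
      = ((gamma1 lam mu / (4*π) * ‖x‖⁻¹ * LK.dl j k
          + gamma2 lam mu / (4*π) * (‖x‖⁻¹ * ‖x‖⁻¹ * ‖x‖⁻¹) * (x j * x k) : ℝ) : ℂ) := by
    simp only [kelvin, xxT, Matrix.sub_apply, Matrix.smul_apply, Matrix.one_apply,
      smul_eq_mul, LK.dl]
    push_cast [apply_ite Complex.ofReal]
    ring
  rw [hkel, ← LK.main_real lam mu hmu hml k j x hx]
  push_cast
  ring

end
end

section
/- (Conormal-derivative kernel scaling, used to prove eq. (2.23)) Fix ω ∈ ℂ \ {0} and denote by u_k^ω(x) := Γ^ω(x)e_k the k-th column of the Kupradze matrix. For every real δ > 0, every x ∈ ℝ³ \ {0}, every ν ∈ ℝ³, and every k ∈ {1,2,3}, the conormal derivative satisfies (∂u_k^ω/∂ν)(δ x) = δ⁻² (∂u_k^{δω}/∂ν)(x), where for a C¹ vector field u the conormal derivative with direction ν is ∂u/∂ν := λ (∂_1 u_1 + ∂_2 u_2 + ∂_3 u_3) ν + μ (∇u + (∇u)ᵀ) ν, with Jacobian (∇u)_{jl} = ∂_l u_j. -/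
open Real MeasureTheory

noncomputable section

-- auxiliary lemmas

lemma div_scale' (E d b : ℂ) : E / (d * b) = d⁻¹ * (E / b) := by
  rw [← div_div, div_right_comm, div_eq_inv_mul]

lemma pd_comp_smul (f : E3 → ℂ) (δ : ℝ) (hδ : δ ≠ 0) (i : Fin 3) (x : E3) :
    pd i f (δ • x) = (δ : ℂ)⁻¹ * pd i (fun y => f (δ • y)) x := by
  have hδc : (δ : ℂ) ≠ 0 := Complex.ofReal_ne_zero.mpr hδ
  unfold pd
  by_cases h : DifferentiableAt ℝ f (δ • x)
  · have hs : HasFDerivAt (fun y : E3 => δ • y) (δ • ContinuousLinearMap.id ℝ E3) x := by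
      exact (hasFDerivAt_id x).const_smul δ
    have hc := (h.hasFDerivAt.comp x hs).fderiv
    have : fderiv ℝ (fun y => f (δ • y)) x (eb i)
        = (δ : ℂ) * fderiv ℝ f (δ • x) (eb i) := by
      rw [show (fun y => f (δ • y)) = f ∘ (fun y : E3 => δ • y) from rfl, hc]
      simp [Complex.real_smul]
    rw [this]
    field_simp
  · have h2 : ¬ DifferentiableAt ℝ (fun y => f (δ • y)) x := by
      intro hc
      apply h
      have hinv : DifferentiableAt ℝ (fun y : E3 => δ⁻¹ • y) (δ • x) :=
        (differentiable_id.const_smul δ⁻¹).differentiableAt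
      have hpt : (δ⁻¹ • (δ • x) : E3) = x := by
        rw [smul_smul, inv_mul_cancel₀ hδ, one_smul]
      have h3 : DifferentiableAt ℝ ((fun y => f (δ • y)) ∘ (fun y : E3 => δ⁻¹ • y)) (δ • x) := by
        apply DifferentiableAt.comp
        · rw [hpt]; exact hc
        · exact hinv
      have h4 : ((fun y => f (δ • y)) ∘ (fun y : E3 => δ⁻¹ • y)) = f := by
        funext y
        simp [Function.comp, smul_smul, mul_inv_cancel₀ hδ]
      rwa [h4] at h3
    rw [fderiv_zero_of_not_differentiableAt h, fderiv_zero_of_not_differentiableAt h2]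
    simp

lemma pd_const_mul' (c : ℂ) (hc : c ≠ 0) (g : E3 → ℂ) (i : Fin 3) (x : E3) :
    pd i (fun y => c * g y) x = c * pd i g x := by
  unfold pd
  by_cases h : DifferentiableAt ℝ g x
  · rw [fderiv_const_mul h c]; simp
  · have h2 : ¬ DifferentiableAt ℝ (fun y => c * g y) x := by
      intro hc2
      have h3 := hc2.const_mul c⁻¹
      have h4 : (fun y => c⁻¹ * (c * g y)) = g := by
        funext y; rw [← mul_assoc, inv_mul_cancel₀ hc, one_mul]
      rw [h4] at h3; exact h h3
    rw [fderiv_zero_of_not_differentiableAt h, fderiv_zero_of_not_differentiableAt h2]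
    simp

/-- the scalar kernel inside the Hessian in `kupradze` -/
def FK (lam mu : ℝ) (ω : ℂ) : E3 → ℂ := fun y =>
  (Complex.exp (Complex.I * ω * (‖y‖ : ℂ) / (cT mu : ℂ))
    - Complex.exp (Complex.I * ω * (‖y‖ : ℂ) / (cL lam mu : ℂ))) / (‖y‖ : ℂ)

lemma FK_scale (lam mu : ℝ) (ω : ℂ) (δ : ℝ) (hδ : 0 < δ) (y : E3) :
    FK lam mu ω (δ • y) = (δ : ℂ)⁻¹ * FK lam mu ((δ : ℂ) * ω) y := by
  unfold FK
  have hn : ‖δ • y‖ = δ * ‖y‖ := by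
    rw [norm_smul, Real.norm_eq_abs, abs_of_pos hδ]
  rw [hn]
  push_cast
  rw [show Complex.I * ω * ((δ : ℂ) * (‖y‖ : ℂ)) / (cT mu : ℂ)
        = Complex.I * ((δ : ℂ) * ω) * (‖y‖ : ℂ) / (cT mu : ℂ) by ring,
      show Complex.I * ω * ((δ : ℂ) * (‖y‖ : ℂ)) / (cL lam mu : ℂ)
        = Complex.I * ((δ : ℂ) * ω) * (‖y‖ : ℂ) / (cL lam mu : ℂ) by ring,
      div_scale']

lemma pd_FK_scale (lam mu : ℝ) (ω : ℂ) (δ : ℝ) (hδ : 0 < δ) (i : Fin 3) (y : E3) :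
    pd i (FK lam mu ω) (δ • y)
      = (δ : ℂ)⁻¹ * ((δ : ℂ)⁻¹ * pd i (FK lam mu ((δ : ℂ) * ω)) y) := by
  have hδc : (δ : ℂ) ≠ 0 := Complex.ofReal_ne_zero.mpr hδ.ne'
  rw [pd_comp_smul _ δ hδ.ne']
  congr 1
  rw [show (fun z => FK lam mu ω (δ • z)) = fun z => (δ : ℂ)⁻¹ * FK lam mu ((δ : ℂ) * ω) z from
        funext (FK_scale lam mu ω δ hδ),
      pd_const_mul' _ (inv_ne_zero hδc)]

lemma hess_FK_scale (lam mu : ℝ) (ω : ℂ) (δ : ℝ) (hδ : 0 < δ) (j k : Fin 3) (x : E3) :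
    hess (FK lam mu ω) (δ • x) j k
      = (δ : ℂ)⁻¹ * ((δ : ℂ)⁻¹ * ((δ : ℂ)⁻¹ * hess (FK lam mu ((δ : ℂ) * ω)) x j k)) := by
  have hδc : (δ : ℂ) ≠ 0 := Complex.ofReal_ne_zero.mpr hδ.ne'
  unfold hess
  rw [pd_comp_smul _ δ hδ.ne']
  congr 1
  rw [show (fun y => pd k (FK lam mu ω) (δ • y))
        = fun y => ((δ : ℂ)⁻¹ * (δ : ℂ)⁻¹) * pd k (FK lam mu ((δ : ℂ) * ω)) y by
      funext y; rw [pd_FK_scale lam mu ω δ hδ k y]; ring,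
      pd_const_mul' _ (mul_ne_zero (inv_ne_zero hδc) (inv_ne_zero hδc))]
  ring

lemma kupradze_scale (lam mu : ℝ) (hmu : 0 < mu) (ω : ℂ) (hω : ω ≠ 0) (δ : ℝ) (hδ : 0 < δ)
    (j k : Fin 3) (z : E3) :
    kupradze lam mu ω (δ • z) j k = (δ : ℂ)⁻¹ * kupradze lam mu ((δ : ℂ) * ω) z j k := by
  have hδc : (δ : ℂ) ≠ 0 := Complex.ofReal_ne_zero.mpr hδ.ne'
  have hπ : (π : ℂ) ≠ 0 := Complex.ofReal_ne_zero.mpr Real.pi_ne_zero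
  have hn : ‖δ • z‖ = δ * ‖z‖ := by
    rw [norm_smul, Real.norm_eq_abs, abs_of_pos hδ]
  show (-(Complex.exp (Complex.I * ω * (‖δ • z‖ : ℂ) / (cT mu : ℂ))
        / (4 * (π : ℂ) * (mu : ℂ) * (‖δ • z‖ : ℂ)))) •
      (1 : Matrix (Fin 3) (Fin 3) ℂ) j k
    + ((1 / (4 * (π : ℂ) * ω ^ 2)) • hess (FK lam mu ω) (δ • z)) j k
    = (δ : ℂ)⁻¹ * ((-(Complex.exp (Complex.I * ((δ : ℂ) * ω) * (‖z‖ : ℂ) / (cT mu : ℂ))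
        / (4 * (π : ℂ) * (mu : ℂ) * (‖z‖ : ℂ)))) •
      (1 : Matrix (Fin 3) (Fin 3) ℂ) j k
    + ((1 / (4 * (π : ℂ) * ((δ : ℂ) * ω) ^ 2)) • hess (FK lam mu ((δ : ℂ) * ω)) z) j k)
  simp only [Matrix.smul_apply, smul_eq_mul]
  rw [hn, hess_FK_scale lam mu ω δ hδ j k z]
  push_cast
  rw [show Complex.I * ω * ((δ : ℂ) * (‖z‖ : ℂ)) / (cT mu : ℂ)
        = Complex.I * ((δ : ℂ) * ω) * (‖z‖ : ℂ) / (cT mu : ℂ) by ring]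
  rw [show (4 * (π : ℂ) * (mu : ℂ) * ((δ : ℂ) * (‖z‖ : ℂ)))
        = (δ : ℂ) * (4 * (π : ℂ) * (mu : ℂ) * (‖z‖ : ℂ)) by ring,
      div_scale']
  rw [show 4 * (π : ℂ) * ((δ : ℂ) * ω) ^ 2
        = (δ : ℂ) * ((δ : ℂ) * (4 * (π : ℂ) * ω ^ 2)) by ring,
      div_scale', div_scale']
  ring

lemma pd_kupradze_scale (lam mu : ℝ) (hmu : 0 < mu) (ω : ℂ) (hω : ω ≠ 0) (δ : ℝ) (hδ : 0 < δ)
    (i j k : Fin 3) (x : E3) :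
    pd i (fun z => kupradze lam mu ω z j k) (δ • x)
      = (δ : ℂ)⁻¹ * ((δ : ℂ)⁻¹ * pd i (fun z => kupradze lam mu ((δ : ℂ) * ω) z j k) x) := by
  have hδc : (δ : ℂ) ≠ 0 := Complex.ofReal_ne_zero.mpr hδ.ne'
  rw [pd_comp_smul _ δ hδ.ne']
  congr 1
  rw [show (fun z => kupradze lam mu ω (δ • z) j k)
        = fun z => (δ : ℂ)⁻¹ * kupradze lam mu ((δ : ℂ) * ω) z j k from
      funext (kupradze_scale lam mu hmu ω hω δ hδ j k),
      pd_const_mul' _ (inv_ne_zero hδc)]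


/-- conormal-derivative kernel scaling:
`(∂u_k^ω/∂ν)(δ x) = δ⁻² (∂u_k^{δω}/∂ν)(x)` for the columns of the Kupradze matrix. -/
theorem kupradze_conormal_scaling (lam mu : ℝ) (hmu : 0 < mu) (hconv : 0 < 3 * lam + 2 * mu)
    (ω : ℂ) (hω : ω ≠ 0) (δ : ℝ) (hδ : 0 < δ) (x : E3) (hx : x ≠ 0) (ν : E3) (k : Fin 3)
    (j : Fin 3) :
    conormal lam mu (fun y i => kupradze lam mu ω y i k) ν (δ • x) j
      = (((δ : ℂ)) ^ 2)⁻¹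
          * conormal lam mu (fun y i => kupradze lam mu ((δ : ℂ) * ω) y i k) ν x j := by
  have hδc : (δ : ℂ) ≠ 0 := Complex.ofReal_ne_zero.mpr hδ.ne'
  simp only [conormal]
  simp only [pd_kupradze_scale lam mu hmu ω hω δ hδ]
  rw [show (∑ i : Fin 3, (δ : ℂ)⁻¹ * ((δ : ℂ)⁻¹
        * pd i (fun z => kupradze lam mu ((δ : ℂ) * ω) z i k) x))
      = ((δ : ℂ)⁻¹ * (δ : ℂ)⁻¹)
        * ∑ i : Fin 3, pd i (fun z => kupradze lam mu ((δ : ℂ) * ω) z i k) x by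
    rw [Finset.mul_sum]; exact Finset.sum_congr rfl fun i _ => by ring]
  rw [show (∑ l : Fin 3, ((δ : ℂ)⁻¹ * ((δ : ℂ)⁻¹
        * pd l (fun z => kupradze lam mu ((δ : ℂ) * ω) z j k) x)
      + (δ : ℂ)⁻¹ * ((δ : ℂ)⁻¹
        * pd j (fun z => kupradze lam mu ((δ : ℂ) * ω) z l k) x)) * (ν l : ℂ))
      = ((δ : ℂ)⁻¹ * (δ : ℂ)⁻¹)
        * ∑ l : Fin 3, (pd l (fun z => kupradze lam mu ((δ : ℂ) * ω) z j k) x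
          + pd j (fun z => kupradze lam mu ((δ : ℂ) * ω) z l k) x) * (ν l : ℂ) by
    rw [Finset.mul_sum]; exact Finset.sum_congr rfl fun l _ => by ring]
  ring

end
end

section
/- (Theorem 3.1, abstract resolvent estimate) Let H be a nontrivial complex Hilbert space, T : H →L[ℂ] H a continuous linear operator, and k₀ ∈ ℝ. Define G := T∘T∘T − k₀²·T and, for k ∈ ℂ, h(k) := k(k² − k₀²). Assume that G is self-adjoint (IsSelfAdjoint G) and that h(k) ∉ spectrum ℂ G. Then k ∉ spectrum ℂ T, i.e. the operator k·1 − T is invertible, and ‖(k·1 − T)⁻¹‖ ≤ ‖T∘T + k·T + (k² − k₀²)·1‖ / dist(h(k), spectrum ℂ G). -/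
set_option maxHeartbeats 1000000 in
/-- Theorem 3.1, abstract resolvent estimate: if
`G := T³ − k₀²·T` is self-adjoint and `h(k) := k(k² − k₀²) ∉ spectrum ℂ G`, then
`k ∉ spectrum ℂ T` and
`‖(k·1 − T)⁻¹‖ ≤ ‖T² + kT + (k² − k₀²)·1‖ / dist(h(k), spectrum ℂ G)`. -/
theorem np_resolvent_estimate {H : Type*} [NormedAddCommGroup H]
    [InnerProductSpace ℂ H] [CompleteSpace H] [Nontrivial H]
    (T : H →L[ℂ] H) (k₀ : ℝ) (k : ℂ)
    (hG : IsSelfAdjoint (T ∘L T ∘L T - ((k₀ : ℂ) ^ 2) • T))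
    (hk : k * (k ^ 2 - (k₀ : ℂ) ^ 2)
        ∉ spectrum ℂ (T ∘L T ∘L T - ((k₀ : ℂ) ^ 2) • T)) :
    k ∉ spectrum ℂ T ∧
      ‖Ring.inverse (k • (1 : H →L[ℂ] H) - T)‖
        ≤ ‖T ∘L T + k • T + (k ^ 2 - (k₀ : ℂ) ^ 2) • (1 : H →L[ℂ] H)‖
          / Metric.infDist (k * (k ^ 2 - (k₀ : ℂ) ^ 2))
              (spectrum ℂ (T ∘L T ∘L T - ((k₀ : ℂ) ^ 2) • T)) := by
  classical
  set G : H →L[ℂ] H := T ∘L T ∘L T - ((k₀ : ℂ) ^ 2) • T with hGdef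
  set z : ℂ := k * (k ^ 2 - (k₀ : ℂ) ^ 2) with hzdef
  set Q : H →L[ℂ] H := T ∘L T + k • T + (k ^ 2 - (k₀ : ℂ) ^ 2) • (1 : H →L[ℂ] H) with hQdef
  set P : H →L[ℂ] H := k • (1 : H →L[ℂ] H) - T with hPdef
  set R : H →L[ℂ] H := algebraMap ℂ (H →L[ℂ] H) z - G with hRdef
  have hcomp3 : (T ∘L T ∘L T : H →L[ℂ] H) = T * (T * T) := rfl
  have hcomp2 : (T ∘L T : H →L[ℂ] H) = T * T := rfl
  have hPQ : P * Q = R := by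
    rw [hPdef, hQdef, hRdef, hGdef, hzdef, hcomp3, hcomp2, Algebra.algebraMap_eq_smul_one]
    simp only [sub_mul, mul_add, add_mul, smul_mul_assoc, mul_smul_comm, one_mul, mul_one,
      smul_smul]
    module
  have hQP : Q * P = R := by
    rw [hPdef, hQdef, hRdef, hGdef, hzdef, hcomp3, hcomp2, Algebra.algebraMap_eq_smul_one]
    simp only [sub_mul, mul_add, add_mul, mul_sub, smul_mul_assoc, mul_smul_comm, one_mul,
      mul_one, smul_smul, mul_assoc]
    module
  -- `R` is a unit
  have hRunit : IsUnit R := spectrum.notMem_iff.mp hk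
  obtain ⟨u, hu⟩ := hRunit
  -- `R` is star-normal
  have hstarR : star R = algebraMap ℂ (H →L[ℂ] H) (starRingEnd ℂ z) - G := by
    rw [hRdef, star_sub, hG.star_eq]
    congr 1
    exact (algebraMap_star_comm z).symm
  have hcomm : Commute (star R) R := by
    rw [hstarR, hRdef]
    have c1 : Commute (algebraMap ℂ (H →L[ℂ] H) (starRingEnd ℂ z)) G := Algebra.commutes _ _
    have c2 : Commute (algebraMap ℂ (H →L[ℂ] H) z) G := Algebra.commutes _ _
    have c12 : Commute (algebraMap ℂ (H →L[ℂ] H) (starRingEnd ℂ z))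
        (algebraMap ℂ (H →L[ℂ] H) z) := Algebra.commutes _ _
    exact (c12.sub_right c1).sub_left (c2.symm.sub_right (Commute.refl G))
  -- facts about the inverse of `R`, then generalize it to an opaque `B`
  have hRB : R * ↑u⁻¹ = 1 := by rw [← hu, u.mul_inv]
  have hBR : (↑u⁻¹ : H →L[ℂ] H) * R = 1 := by rw [← hu, u.inv_mul]
  have hcomm' : Commute (star (↑u⁻¹ : H →L[ℂ] H)) (↑u⁻¹ : H →L[ℂ] H) := by
    rw [← Units.coe_star_inv]
    have hcu : Commute (↑(star u) : H →L[ℂ] H) (↑u : H →L[ℂ] H) := by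
      rw [Units.coe_star, hu]; exact hcomm
    exact (hcu.units_inv_left).units_inv_right
  have hsp : spectrum ℂ (↑u⁻¹ : H →L[ℂ] H) = (spectrum ℂ R)⁻¹ := by
    rw [← spectrum.map_inv, hu]
  obtain ⟨B, hB⟩ : ∃ B : H →L[ℂ] H, (↑u⁻¹ : H →L[ℂ] H) = B := ⟨_, rfl⟩
  rw [hB] at hRB hBR hcomm' hsp
  have hnormal : IsStarNormal B := ⟨hcomm'⟩
  -- `P` is a unit with inverse `Q * B`
  have h1 : P * (Q * B) = 1 := by rw [← mul_assoc, hPQ, hRB]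
  have h2 : (B * Q) * P = 1 := by rw [mul_assoc, hQP, hBR]
  have hli : B * Q = Q * B := by
    calc B * Q = (B * Q) * (P * (Q * B)) := by rw [h1, mul_one]
    _ = ((B * Q) * P) * (Q * B) := by simp only [mul_assoc]
    _ = Q * B := by rw [h2, one_mul]
  have h2' : (Q * B) * P = 1 := by rw [← hli, h2]
  have hPunit : IsUnit P := ⟨⟨P, Q * B, h1, h2'⟩, rfl⟩
  have hknot : k ∉ spectrum ℂ T := by
    rw [spectrum.notMem_iff, Algebra.algebraMap_eq_smul_one]
    exact hPunit
  refine ⟨hknot, ?_⟩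
  -- distance is positive
  have hGne : (spectrum ℂ G).Nonempty := spectrum.nonempty G
  have hGcl : IsClosed (spectrum ℂ G) := spectrum.isClosed G
  set d : ℝ := Metric.infDist z (spectrum ℂ G) with hddef
  have hd : 0 < d := (hGcl.notMem_iff_infDist_pos hGne).mp hk
  -- spectral radius bound for `B`
  have hsr : spectralRadius ℂ B ≤ ENNReal.ofReal (1 / d) := by
    rw [spectralRadius]
    refine iSup₂_le fun μ hμ => ?_
    have hμ' : μ⁻¹ ∈ spectrum ℂ R := by
      rw [hsp] at hμ
      exact Set.mem_inv.mp hμ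
    rw [hRdef, ← spectrum.singleton_sub_eq] at hμ'
    obtain ⟨zz, hzz, lam, hlam, hsum⟩ := hμ'
    rw [Set.mem_singleton_iff] at hzz
    subst hzz
    have hdle : d ≤ ‖z - lam‖ := by
      have := Metric.infDist_le_dist_of_mem (x := z) hlam
      rwa [dist_eq_norm] at this
    have hne : z - lam ≠ 0 := by
      intro h0
      rw [h0, norm_zero] at hdle
      linarith
    have hμeq : μ = (z - lam)⁻¹ := by
      have hh : μ⁻¹ = z - lam := hsum.symm
      rw [← hh, inv_inv]
    have hnorm : ‖μ‖ ≤ 1 / d := by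
      rw [hμeq, norm_inv, one_div]
      exact inv_anti₀ hd hdle
    calc (‖μ‖₊ : ENNReal) = ENNReal.ofReal ‖μ‖ := (ofReal_norm μ).symm
    _ ≤ ENNReal.ofReal (1 / d) := ENNReal.ofReal_le_ofReal hnorm
  have hinvnorm : ‖B‖ ≤ 1 / d := by
    have hh := (IsStarNormal.spectralRadius_eq_nnnorm B).symm.le.trans hsr
    rw [← enorm_eq_nnnorm, ← ofReal_norm] at hh
    exact (ENNReal.ofReal_le_ofReal_iff (by positivity)).mp hh
  -- conclude
  have hinv : Ring.inverse P = Q * B := by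
    rw [show P = ((⟨P, Q * B, h1, h2'⟩ : (H →L[ℂ] H)ˣ) : H →L[ℂ] H) from rfl,
      Ring.inverse_unit]
    rfl
  rw [hinv]
  calc ‖Q * B‖ ≤ ‖Q‖ * ‖B‖ := norm_mul_le _ _
  _ ≤ ‖Q‖ * (1 / d) := mul_le_mul_of_nonneg_left hinvnorm (norm_nonneg Q)
  _ = ‖Q‖ / d := by ring
end
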